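/- Let G=(V,E) be an undirected multigraph with edge set partitioned into safe edges S and unsafe edges U, and let p ≥ 1, q ≥ 0 be integers. An edge set F ⊆ E has the property that (V, F \ F') is p-edge-connected for every F' ⊆ F ∩ U with |F'| ≤ q, if and only if for every nonempty proper vertex subset R ⊊ V, the cut edge set F ∩ δ(R) either contains at least p safe edges or contains at least p+q edges in total. -/

import Mathlib

open Finset

/-- The set of edges with exactly one endpoint in `R`. -/
def cutEdges {V ε : Type} [DecidableEq V] [Fintype ε] [DecidableEq ε]
    (ends : ε → V × V) (R : Finset V) : Finset ε :=
  Finset.univ.filter fun e =>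
    ((ends e).1 ∈ R ∧ (ends e).2 ∉ R) ∨ ((ends e).2 ∈ R ∧ (ends e).1 ∉ R)

/-- `F` is `(p,q)`-feasible: every nontrivial cut contains at least `p` safe edges
or at least `p+q` edges in total. -/
def Feasible {V ε : Type} [Fintype V] [DecidableEq V] [Fintype ε] [DecidableEq ε]
    (ends : ε → V × V) (S : Finset ε) (p q : ℕ) (F : Finset ε) : Prop :=
  ∀ R : Finset V, R.Nonempty → R ≠ Finset.univ →
    p ≤ ((F ∩ cutEdges ends R) ∩ S).card ∨ p + q ≤ (F ∩ cutEdges ends R).card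

/-- Cut characterization of `(p,q)`-feasibility: `(V, F \ F')` is `p`-edge-connected
(every nontrivial cut has at least `p` edges) for every set `F'` of at most `q` unsafe
edges of `F`, iff every nontrivial cut of `F` has at least `p` safe edges or at least
`p+q` edges in total. -/
theorem cut_characterization {V ε : Type} [Fintype V] [DecidableEq V]
    [Fintype ε] [DecidableEq ε]
    (ends : ε → V × V) (hloopless : ∀ e, (ends e).1 ≠ (ends e).2)
    (hconn : ∀ R : Finset V, R.Nonempty → R ≠ Finset.univ → (cutEdges ends R).Nonempty)
    (S : Finset ε) (p q : ℕ) (hp : 1 ≤ p) (F : Finset ε) :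
    (∀ F' : Finset ε, F' ⊆ F ∩ Sᶜ → F'.card ≤ q →
        ∀ R : Finset V, R.Nonempty → R ≠ Finset.univ →
          p ≤ (((F \ F') ∩ cutEdges ends R)).card) ↔
    (∀ R : Finset V, R.Nonempty → R ≠ Finset.univ →
        p ≤ ((F ∩ cutEdges ends R) ∩ S).card ∨ p + q ≤ (F ∩ cutEdges ends R).card) := by
  constructor
  · intro h R hR hRu
    by_contra hcon
    push_neg at hcon
    obtain ⟨h1, h2⟩ := hcon
    set A := F ∩ cutEdges ends R with hA
    by_cases hq : q ≤ (A ∩ Sᶜ).card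
    · obtain ⟨F', hF'sub, hF'card⟩ := Finset.exists_subset_card_eq hq
      have hsub : F' ⊆ F ∩ Sᶜ := by
        intro e he
        have := hF'sub he
        simp only [hA, Finset.mem_inter] at this ⊢
        tauto
      have key : (F \ F') ∩ cutEdges ends R = A \ F' := by
        ext e
        simp only [hA, Finset.mem_sdiff, Finset.mem_inter]
        tauto
      have hsubA : F' ⊆ A := hF'sub.trans Finset.inter_subset_left
      have hcard : (A \ F').card = A.card - q := by
        rw [Finset.card_sdiff_of_subset hsubA, hF'card]
      have hh := h F' hsub (le_of_eq hF'card) R hR hRu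
      rw [key, hcard] at hh
      have hq' : q ≤ A.card := hq.trans (Finset.card_le_card Finset.inter_subset_left)
      omega
    · push_neg at hq
      have hsub : A ∩ Sᶜ ⊆ F ∩ Sᶜ := by
        intro e he
        simp only [hA, Finset.mem_inter] at he ⊢
        tauto
      have key : (F \ (A ∩ Sᶜ)) ∩ cutEdges ends R = A ∩ S := by
        ext e
        simp only [hA, Finset.mem_sdiff, Finset.mem_inter, Finset.mem_compl]
        tauto
      have hh := h (A ∩ Sᶜ) hsub (le_of_lt hq) R hR hRu
      rw [key] at hh
      omega
  · intro h F' hF' hF'card R hR hRu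
    set A := F ∩ cutEdges ends R with hA
    have key : A \ F' ⊆ (F \ F') ∩ cutEdges ends R := by
      intro e he
      simp only [hA, Finset.mem_sdiff, Finset.mem_inter] at he ⊢
      tauto
    rcases h R hR hRu with hs | ht
    · have hsub : A ∩ S ⊆ A \ F' := by
        intro e he
        simp only [Finset.mem_inter, Finset.mem_sdiff] at he ⊢
        refine ⟨he.1, fun hmem => ?_⟩
        have := hF' hmem
        simp only [Finset.mem_inter, Finset.mem_compl] at this
        exact this.2 he.2
      exact hs.trans ((Finset.card_le_card hsub).trans (Finset.card_le_card key))
    · rw [← hA] at ht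
      have h1 : A.card - F'.card ≤ (A \ F').card := Finset.le_card_sdiff F' A
      have h2 := Finset.card_le_card key
      omega
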